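/- Let k > 0 and R > 0. Suppose w : [0,1] → ℝ is four times continuously differentiable, T : [0,1] → ℝ is continuous, and they satisfy w''''(z) − 2k² w''(z) + k⁴ w(z) = R k² T(z) for all z ∈ [0,1], together with the stress-free boundary conditions w(0) = w(1) = 0 and w''(0) = w''(1) = 0. Then ∫₀¹ (w''(z) − k² w(z))² dz ≤ R² ∫₀¹ T(z)² dz. -/

import Mathlib

open MeasureTheory intervalIntegral

/-- First pseudo-vorticity estimate (Lemma 2 of the paper, after Whitehead–Doering 2012):
if `w'''' - 2k²w'' + k⁴w = Rk²T` on `[0,1]` with stress-free boundary conditions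
`w(0) = w(1) = w''(0) = w''(1) = 0`, then `∫₀¹ (w'' - k²w)² ≤ R² ∫₀¹ T²`. -/
theorem pseudo_vorticity_L2_estimate_stress_free
    (k R : ℝ) (hk : 0 < k) (hR : 0 < R)
    (w T : ℝ → ℝ) (hw : ContDiff ℝ 4 w) (hT : Continuous T)
    (hode : ∀ z ∈ Set.Icc (0:ℝ) 1,
      iteratedDeriv 4 w z - 2 * k^2 * iteratedDeriv 2 w z + k^4 * w z = R * k^2 * T z)
    (hw0 : w 0 = 0) (hw1 : w 1 = 0)
    (hw''0 : iteratedDeriv 2 w 0 = 0) (hw''1 : iteratedDeriv 2 w 1 = 0) :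
    (∫ z in (0:ℝ)..1, (iteratedDeriv 2 w z - k^2 * w z)^2) ≤
      R^2 * ∫ z in (0:ℝ)..1, (T z)^2 := by
  set ζ : ℝ → ℝ := fun z => iteratedDeriv 2 w z - k^2 * w z with hζdef
  set ζ' : ℝ → ℝ := fun z => iteratedDeriv 3 w z - k^2 * deriv w z with hζ'def
  set ζ'' : ℝ → ℝ := fun z => iteratedDeriv 4 w z - k^2 * iteratedDeriv 2 w z with hζ''def
  -- continuity facts
  have hc0 : Continuous w := hw.continuous
  have hc1 : Continuous (deriv w) := by
    have := hw.continuous_iteratedDeriv 1 (by norm_num)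
    simpa [iteratedDeriv_one] using this
  have hc2 : Continuous (iteratedDeriv 2 w) := hw.continuous_iteratedDeriv 2 (by norm_num)
  have hc3 : Continuous (iteratedDeriv 3 w) := hw.continuous_iteratedDeriv 3 (by norm_num)
  have hc4 : Continuous (iteratedDeriv 4 w) := hw.continuous_iteratedDeriv 4 (by norm_num)
  have hcζ : Continuous ζ := by fun_prop
  have hcζ' : Continuous ζ' := by fun_prop
  have hcζ'' : Continuous ζ'' := by fun_prop
  -- derivative facts
  have hd0 : Differentiable ℝ w := hw.differentiable (by norm_num)
  have hd1 : Differentiable ℝ (iteratedDeriv 1 w) := hw.differentiable_iteratedDeriv 1 (by norm_num)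
  have hd2 : Differentiable ℝ (iteratedDeriv 2 w) := hw.differentiable_iteratedDeriv 2 (by norm_num)
  have hd3 : Differentiable ℝ (iteratedDeriv 3 w) := hw.differentiable_iteratedDeriv 3 (by norm_num)
  have hζd : ∀ x : ℝ, HasDerivAt ζ (ζ' x) x := by
    intro x
    have h1 : HasDerivAt (iteratedDeriv 2 w) (iteratedDeriv 3 w x) x := by
      have := (hd2 x).hasDerivAt
      rwa [show iteratedDeriv 3 w x = deriv (iteratedDeriv 2 w) x by
        rw [iteratedDeriv_succ]]
    have h2 : HasDerivAt w (deriv w x) x := (hd0 x).hasDerivAt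
    exact h1.sub (h2.const_mul (k^2))
  have hζ'd : ∀ x : ℝ, HasDerivAt ζ' (ζ'' x) x := by
    intro x
    have h1 : HasDerivAt (iteratedDeriv 3 w) (iteratedDeriv 4 w x) x := by
      have := (hd3 x).hasDerivAt
      rwa [show iteratedDeriv 4 w x = deriv (iteratedDeriv 3 w) x by
        rw [iteratedDeriv_succ]]
    have h2 : HasDerivAt (deriv w) (iteratedDeriv 2 w x) x := by
      have heq : deriv w = iteratedDeriv 1 w := iteratedDeriv_one.symm
      rw [heq]
      have := (hd1 x).hasDerivAt
      rwa [show iteratedDeriv 2 w x = deriv (iteratedDeriv 1 w) x by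
        rw [iteratedDeriv_succ]]
    exact h1.sub (h2.const_mul (k^2))
  -- integration by parts: ∫ ζ ζ'' = ζ(1)ζ'(1) - ζ(0)ζ'(0) - ∫ ζ' ζ'
  have hibp : ∫ x in (0:ℝ)..1, ζ x * ζ'' x
      = ζ 1 * ζ' 1 - ζ 0 * ζ' 0 - ∫ x in (0:ℝ)..1, ζ' x * ζ' x := by
    exact integral_mul_deriv_eq_deriv_mul (fun x _ => hζd x) (fun x _ => hζ'd x)
      (hcζ'.intervalIntegrable 0 1) (hcζ''.intervalIntegrable 0 1)
  have hbz : ζ 1 = 0 := by simp [hζdef, hw1, hw''1]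
  have hbz0 : ζ 0 = 0 := by simp [hζdef, hw0, hw''0]
  -- ODE rewrite: on Icc, ζ x * ζ'' x = k^2 * ζ x ^ 2 + R * k^2 * T x * ζ x
  have hode' : ∀ x ∈ Set.uIcc (0:ℝ) 1,
      ζ x * ζ'' x = k^2 * ζ x ^ 2 + R * k^2 * (T x * ζ x) := by
    intro x hx
    rw [Set.uIcc_of_le (by norm_num)] at hx
    have h := hode x hx
    have : ζ'' x = k^2 * ζ x + R * k^2 * T x := by
      simp only [hζ''def, hζdef]
      nlinarith [h]
    rw [this]; ring
  have hint1 : ∫ x in (0:ℝ)..1, ζ x * ζ'' x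
      = ∫ x in (0:ℝ)..1, (k^2 * ζ x ^ 2 + R * k^2 * (T x * ζ x)) :=
    intervalIntegral.integral_congr hode'
  -- integrability
  have hiζ2 : IntervalIntegrable (fun x => ζ x ^ 2) volume 0 1 :=
    (hcζ.pow 2).intervalIntegrable 0 1
  have hiTζ : IntervalIntegrable (fun x => T x * ζ x) volume 0 1 :=
    (hT.mul hcζ).intervalIntegrable 0 1
  have hiT2 : IntervalIntegrable (fun x => T x ^ 2) volume 0 1 :=
    (hT.pow 2).intervalIntegrable 0 1
  set A := ∫ x in (0:ℝ)..1, ζ x ^ 2 with hA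
  set B := ∫ x in (0:ℝ)..1, T x ^ 2 with hB
  set C := ∫ x in (0:ℝ)..1, T x * ζ x with hC
  have hsplit : ∫ x in (0:ℝ)..1, (k^2 * ζ x ^ 2 + R * k^2 * (T x * ζ x))
      = k^2 * A + R * k^2 * C := by
    rw [intervalIntegral.integral_add (hiζ2.const_mul _) (hiTζ.const_mul _),
      intervalIntegral.integral_const_mul, intervalIntegral.integral_const_mul]
  have hD : 0 ≤ ∫ x in (0:ℝ)..1, ζ' x * ζ' x := by
    apply intervalIntegral.integral_nonneg (by norm_num)
    intro x _; exact mul_self_nonneg _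
  have hkey : k^2 * A + R * k^2 * C ≤ 0 := by
    rw [← hsplit, ← hint1, hibp, hbz, hbz0]
    simp
    linarith [hD]
  -- pointwise AM-GM: -2*R*k^2*(T x * ζ x) ≤ k^2 * ζ x ^2 + R^2*k^2*T x^2
  have hptwise : ∀ x ∈ Set.uIcc (0:ℝ) 1,
      -(2 * (R * k^2)) * (T x * ζ x) ≤ k^2 * ζ x ^ 2 + R^2 * k^2 * T x ^ 2 := by
    intro x _
    nlinarith [sq_nonneg (k * ζ x + R * k * T x)]
  have hmono : -(2 * (R * k^2)) * C ≤ k^2 * A + R^2 * k^2 * B := by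
    have := intervalIntegral.integral_mono_on (by norm_num : (0:ℝ) ≤ 1)
      ((hiTζ.const_mul _)) ((hiζ2.const_mul (k^2)).add (hiT2.const_mul (R^2*k^2)))
      (by intro x hx
          exact hptwise x (by rwa [Set.uIcc_of_le (by norm_num)]))
    rw [intervalIntegral.integral_const_mul,
      intervalIntegral.integral_add (hiζ2.const_mul _) (hiT2.const_mul _),
      intervalIntegral.integral_const_mul, intervalIntegral.integral_const_mul] at this
    linarith [this]
  -- conclude
  have hAB : k^2 * A ≤ R^2 * k^2 * B := by nlinarith [hkey, hmono]
  have hk2 : 0 < k^2 := by positivity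
  calc A ≤ R^2 * B := by nlinarith [hAB, hk2]
    _ = R^2 * B := rfl
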